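/- If groups G and H each admit a pointy action, then the direct product G × H admits a pointy action. -/

import Mathlib

/-! Common definitions: the full shift, its automorphism group, and wreath products. -/

/-- The full shift space `Σ^ℤ` (functions `ℤ → α`), carrying the product topology
where the alphabet `α` is given the discrete topology. -/
def FullShift (α : Type*) : Type _ := ℤ → α

instance (α : Type*) : TopologicalSpace (FullShift α) :=
  letI : TopologicalSpace α := ⊥
  (inferInstance : TopologicalSpace (ℤ → α))

/-- The shift homeomorphism `σ(x)(i) = x(i+1)`. -/
def shiftHomeo (α : Type*) : FullShift α ≃ₜ FullShift α where
  toFun x := fun i => x (i + 1)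
  invFun x := fun i => x (i - 1)
  left_inv x := by funext i; show x (i - 1 + 1) = x i; ring_nf
  right_inv x := by funext i; show x (i + 1 - 1) = x i; ring_nf
  continuous_toFun := by
    letI : TopologicalSpace α := ⊥
    exact continuous_pi fun i => continuous_apply (i + 1)
  continuous_invFun := by
    letI : TopologicalSpace α := ⊥
    exact continuous_pi fun i => continuous_apply (i - 1)

/-- The group of self-homeomorphisms of the full shift, under composition. -/
instance fullShiftHomeoGroup (α : Type*) : Group (FullShift α ≃ₜ FullShift α) where
  mul f g := g.trans f
  one := Homeomorph.refl _
  inv := Homeomorph.symm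
  mul_assoc f g h := Homeomorph.ext fun _ => rfl
  one_mul f := Homeomorph.ext fun _ => rfl
  mul_one f := Homeomorph.ext fun _ => rfl
  inv_mul_cancel f := Homeomorph.ext fun x => f.symm_apply_apply x

/-- The automorphism group `Aut(Σ^ℤ)` of the full shift: the centralizer of the
shift map in the group of self-homeomorphisms. -/
def ShiftAut (α : Type*) : Subgroup (FullShift α ≃ₜ FullShift α) :=
  Subgroup.centralizer {shiftHomeo α}

/-- Self-homeomorphisms of the full shift act on the full shift by application. -/
instance fullShiftHomeoMulAction (α : Type*) :
    MulAction (FullShift α ≃ₜ FullShift α) (FullShift α) where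
  smul f x := f x
  one_smul _ := rfl
  mul_smul _ _ _ := rfl

/-- The constant configuration with value `z`. -/
def constConfig (α : Type*) (z : α) : FullShift α := fun _ => z

/-- `Aut₀(Σ^ℤ)`: the subgroup of `Aut(Σ^ℤ)` consisting of the shift-commuting
self-homeomorphisms which fix the constant-`z` configuration. -/
def ShiftAut₀ (α : Type*) (z : α) : Subgroup (FullShift α ≃ₜ FullShift α) :=
  ShiftAut α ⊓ MulAction.stabilizer (FullShift α ≃ₜ FullShift α) (constConfig α z)

/-- A group `G` admits a *pointy action* if there is a finite alphabet `E` with a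
distinguished element `z` and an injective homomorphism `φ : G →* Aut(E^ℤ)` such that every
`φ g` fixes the constant-`z` configuration, and some `z`-finite configuration `x₀` has free
orbit, i.e. `g ↦ φ(g)(x₀)` is injective. -/
def HasPointyAction (G : Type*) [Group G] : Prop :=
  ∃ (E : Type) (_ : Fintype E) (z : E) (φ : G →* ShiftAut E),
    Function.Injective φ ∧
    (∀ g : G, (φ g : FullShift E ≃ₜ FullShift E) • constConfig E z = constConfig E z) ∧
    ∃ x₀ : FullShift E, {i : ℤ | x₀ i ≠ z}.Finite ∧
      Function.Injective fun g : G => (φ g : FullShift E ≃ₜ FullShift E) • x₀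

/-- The pairing homeomorphism of full shifts with product alphabet. -/
def prodHomeo {E F : Type} (f : FullShift E ≃ₜ FullShift E)
    (g : FullShift F ≃ₜ FullShift F) : FullShift (E × F) ≃ₜ FullShift (E × F) where
  toFun x := fun i => (f (fun j => (x j).1) i, g (fun j => (x j).2) i)
  invFun x := fun i => (f.symm (fun j => (x j).1) i, g.symm (fun j => (x j).2) i)
  left_inv x := by
    funext i
    have h1 : (fun j => ((fun i => (f (fun j => (x j).1) i, g (fun j => (x j).2) i)) j).1)
        = f (fun j => (x j).1) := rfl
    have := f.symm_apply_apply (fun j => (x j).1)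
    show (f.symm (f (fun j => (x j).1)) i, g.symm (g (fun j => (x j).2)) i) = x i
    exact Prod.ext (congrFun (f.symm_apply_apply _) i) (congrFun (g.symm_apply_apply _) i)
  right_inv x := by
    funext i
    show (f (f.symm (fun j => (x j).1)) i, g (g.symm (fun j => (x j).2)) i) = x i
    exact Prod.ext (congrFun (f.apply_symm_apply _) i) (congrFun (g.apply_symm_apply _) i)
  continuous_toFun := by
    letI : TopologicalSpace E := ⊥
    letI : TopologicalSpace F := ⊥
    letI : TopologicalSpace (E × F) := ⊥
    have c1 : Continuous fun (x : FullShift (E × F)) => (fun j => (x j).1 : FullShift E) :=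
      continuous_pi fun j => continuous_bot.comp (continuous_apply j)
    have c2 : Continuous fun (x : FullShift (E × F)) => (fun j => (x j).2 : FullShift F) :=
      continuous_pi fun j => continuous_bot.comp (continuous_apply j)
    have hEF : (instTopologicalSpaceProd : TopologicalSpace (E × F)) = ⊥ := by
      letI : DiscreteTopology E := discreteTopology_bot E
      letI : DiscreteTopology F := discreteTopology_bot F
      exact DiscreteTopology.eq_bot
    exact continuous_pi fun i => hEF ▸
      (((continuous_apply i).comp (f.continuous.comp c1)).prodMk
        ((continuous_apply i).comp (g.continuous.comp c2)))
  continuous_invFun := by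
    letI : TopologicalSpace E := ⊥
    letI : TopologicalSpace F := ⊥
    letI : TopologicalSpace (E × F) := ⊥
    have c1 : Continuous fun (x : FullShift (E × F)) => (fun j => (x j).1 : FullShift E) :=
      continuous_pi fun j => continuous_bot.comp (continuous_apply j)
    have c2 : Continuous fun (x : FullShift (E × F)) => (fun j => (x j).2 : FullShift F) :=
      continuous_pi fun j => continuous_bot.comp (continuous_apply j)
    have hEF : (instTopologicalSpaceProd : TopologicalSpace (E × F)) = ⊥ := by
      letI : DiscreteTopology E := discreteTopology_bot E
      letI : DiscreteTopology F := discreteTopology_bot F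
      exact DiscreteTopology.eq_bot
    exact continuous_pi fun i => hEF ▸
      (((continuous_apply i).comp (f.symm.continuous.comp c1)).prodMk
        ((continuous_apply i).comp (g.symm.continuous.comp c2)))

/-- Pairing of two configurations. -/
def pairCfg {E F : Type} (a : FullShift E) (b : FullShift F) : FullShift (E × F) :=
  fun i => (a i, b i)

lemma shift_comm_apply {E : Type} {f : FullShift E ≃ₜ FullShift E}
    (hf : f ∈ ShiftAut E) (x : FullShift E) :
    f (shiftHomeo E x) = shiftHomeo E (f x) := by
  have h := Subgroup.mem_centralizer_iff.mp hf (shiftHomeo E) rfl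
  have := congrArg (fun (k : FullShift E ≃ₜ FullShift E) => k.toFun x) h
  exact this.symm

/-- Pointy actions are closed under direct products. -/
theorem hasPointyAction_prod (G H : Type*) [Group G] [Group H]
    (hG : HasPointyAction G) (hH : HasPointyAction H) : HasPointyAction (G × H) := by
  obtain ⟨E, _, zE, φG, _, hφGfix, x₀G, hx₀Gfin, hx₀Ginj⟩ := hG
  obtain ⟨F, _, zF, φH, _, hφHfix, x₀H, hx₀Hfin, hx₀Hinj⟩ := hH
  have mem : ∀ (p : G × H),
      prodHomeo (φG p.1 : FullShift E ≃ₜ FullShift E)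
        (φH p.2 : FullShift F ≃ₜ FullShift F) ∈ ShiftAut (E × F) := by
    intro p
    refine Subgroup.mem_centralizer_iff.mpr ?_
    intro h hh
    rw [Set.mem_singleton_iff] at hh
    subst hh
    refine Homeomorph.ext fun x => ?_
    show shiftHomeo (E × F)
        (prodHomeo (φG p.1 : FullShift E ≃ₜ FullShift E) (φH p.2) x)
      = prodHomeo (φG p.1 : FullShift E ≃ₜ FullShift E) (φH p.2) (shiftHomeo (E × F) x)
    funext i
    show ((φG p.1 : FullShift E ≃ₜ FullShift E) (fun j => (x j).1) (i + 1),
          (φH p.2 : FullShift F ≃ₜ FullShift F) (fun j => (x j).2) (i + 1))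
        = ((φG p.1 : FullShift E ≃ₜ FullShift E) (fun j => (x (j + 1)).1) i,
           (φH p.2 : FullShift F ≃ₜ FullShift F) (fun j => (x (j + 1)).2) i)
    have h1 := shift_comm_apply (φG p.1).2 (fun j => (x j).1)
    have h2 := shift_comm_apply (φH p.2).2 (fun j => (x j).2)
    rw [show (fun j => (x (j + 1)).1) = shiftHomeo E (fun j => (x j).1) from rfl,
        show (fun j => (x (j + 1)).2) = shiftHomeo F (fun j => (x j).2) from rfl,
        h1, h2]
    rfl
  set φ : G × H →* ShiftAut (E × F) :=
    { toFun := fun p => ⟨prodHomeo (φG p.1 : FullShift E ≃ₜ FullShift E)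
        (φH p.2 : FullShift F ≃ₜ FullShift F), mem p⟩
      map_one' := by
        refine Subtype.ext (Homeomorph.ext fun x => ?_)
        funext i
        show ((φG 1 : FullShift E ≃ₜ FullShift E) (fun j => (x j).1) i,
              (φH 1 : FullShift F ≃ₜ FullShift F) (fun j => (x j).2) i) = x i
        rw [map_one φG, map_one φH]
        rfl
      map_mul' := by
        intro p q
        refine Subtype.ext (Homeomorph.ext fun x => ?_)
        funext i
        show ((φG (p.1 * q.1) : FullShift E ≃ₜ FullShift E) (fun j => (x j).1) i,
              (φH (p.2 * q.2) : FullShift F ≃ₜ FullShift F) (fun j => (x j).2) i) = _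
        rw [map_mul φG, map_mul φH]
        rfl } with hφdef
  have orbinj : Function.Injective fun p : G × H =>
      (φ p : FullShift (E × F) ≃ₜ FullShift (E × F)) •
        pairCfg x₀G x₀H := by
    intro p q hpq
    have hpt : ∀ i : ℤ,
        ((φG p.1 : FullShift E ≃ₜ FullShift E) x₀G i,
         (φH p.2 : FullShift F ≃ₜ FullShift F) x₀H i)
        = ((φG q.1 : FullShift E ≃ₜ FullShift E) x₀G i,
           (φH q.2 : FullShift F ≃ₜ FullShift F) x₀H i) :=
      fun i => congrFun hpq i
    have h1 : p.1 = q.1 := hx₀Ginj (funext fun i => congrArg Prod.fst (hpt i))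
    have h2 : p.2 = q.2 := hx₀Hinj (funext fun i => congrArg Prod.snd (hpt i))
    exact Prod.ext h1 h2
  refine ⟨E × F, inferInstance, (zE, zF), φ, ?_, ?_, pairCfg x₀G x₀H, ?_, orbinj⟩
  · intro p q hpq
    exact orbinj (by simp only [hpq])
  · intro p
    funext i
    show ((φG p.1 : FullShift E ≃ₜ FullShift E) (fun _ => zE) i,
          (φH p.2 : FullShift F ≃ₜ FullShift F) (fun _ => zF) i) = (zE, zF)
    have h1 := congrFun (hφGfix p.1) i
    have h2 := congrFun (hφHfix p.2) i
    exact Prod.ext h1 h2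
  · refine (hx₀Gfin.union hx₀Hfin).subset ?_
    intro i hi
    by_contra hmem
    simp only [Set.mem_union, Set.mem_setOf_eq, not_or, not_not] at hmem
    exact hi (by simp [Set.mem_setOf_eq, hmem.1, hmem.2] at hi ⊢; exact Prod.ext hmem.1 hmem.2)
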